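/- Corollary (line graphs): Let H be a simple undirected graph and let G be the line graph of H, having n ≥ 1 vertices (one vertex per edge of H, two vertices adjacent iff the corresponding edges of H share an endpoint). Viewing G as an undirected side information graph, the clique covering scheme approximates the broadcast rate within a multiplicative factor of n^{2/3}; that is, χ(Ḡ) ≤ n^{2/3} · β(G). -/

import Mathlib

/-- A `(t, r)` index code for the side-information relation `E` on vertex type `V`:
an edge `i → j` (i.e., `E i j`) means that receiver `j` has message `i` as side
information.  Messages are `t`-bit strings `Fin t → Bool`, the broadcast index is an
`r`-bit string `Fin r → Bool`, and every receiver `j` can recover its message `x j`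
from the index and its side information. -/
structure IndexCode {V : Type*} (E : V → V → Prop) (t r : ℕ) where
  enc : (V → (Fin t → Bool)) → (Fin r → Bool)
  dec : ∀ j : V, (Fin r → Bool) → (({i : V // E i j}) → (Fin t → Bool)) → (Fin t → Bool)
  correct : ∀ (x : V → (Fin t → Bool)) (j : V),
    dec j (enc x) (fun i => x i.1) = x j

/-- The broadcast rate `β = inf { r / t : a (t, r) index code exists }`. -/
noncomputable def broadcastRate {V : Type*} (E : V → V → Prop) : ℝ :=
  sInf { q : ℝ | ∃ t r : ℕ, 0 < t ∧ Nonempty (IndexCode E t r) ∧ q = (r : ℝ) / t }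

lemma nonempty_indexCode {V : Type*} [Fintype V] (E : V → V → Prop) :
    Nonempty (IndexCode E 1 (Fintype.card V)) := by
  let e := Fintype.equivFin V
  refine ⟨⟨fun x k => x (e.symm k) 0, fun j b _ => fun _ => b (e j), ?_⟩⟩
  intro x j
  funext i
  have : i = 0 := Subsingleton.elim _ _
  simp [this, e]

lemma card_le_broadcastRate {V : Type*} [Fintype V] [DecidableEq V] (E : V → V → Prop)
    (S : Finset V) (hS : ∀ i ∈ S, ∀ j ∈ S, ¬ E i j) :
    (S.card : ℝ) ≤ broadcastRate E := by
  refine le_csInf ⟨((Fintype.card V : ℝ) / 1), ⟨1, Fintype.card V, one_pos,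
    nonempty_indexCode E, by norm_num⟩⟩ ?_
  rintro q ⟨t, r, ht, ⟨c⟩, rfl⟩
  rw [le_div_iff₀ (by exact_mod_cast ht)]
  have key : t * S.card ≤ r := by
    have hinj : Function.Injective
        (fun (y : {i : V // i ∈ S} → (Fin t → Bool)) =>
          c.enc (fun v => if h : v ∈ S then y ⟨v, h⟩ else fun _ => false)) := by
      intro y y' h
      funext j
      set x : V → Fin t → Bool := fun v => if h : v ∈ S then y ⟨v, h⟩ else fun _ => false
      set x' : V → Fin t → Bool := fun v => if h : v ∈ S then y' ⟨v, h⟩ else fun _ => false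
      have hside : (fun i : {i : V // E i j.1} => x i.1) = (fun i => x' i.1) := by
        funext i
        have hiS : i.1 ∉ S := fun hiS => hS i.1 hiS j.1 j.2 i.2
        simp [x, x', hiS]
      have h1 := c.correct x j.1
      have h2 := c.correct x' j.1
      rw [hside] at h1
      have : x j.1 = x' j.1 := by
        rw [← h1, ← h2]
        simp only [x, x'] at h ⊢
        rw [h]
      simpa [x, x', j.2] using this
    have hcard := Fintype.card_le_of_injective _ hinj
    simp only [Fintype.card_fun, Fintype.card_bool, Fintype.card_fin, Fintype.card_coe] at hcard
    rw [← pow_mul] at hcard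
    exact (Nat.pow_le_pow_iff_right one_lt_two).mp hcard
  calc ((S.card : ℝ)) * t = ((t * S.card : ℕ) : ℝ) := by push_cast; ring
    _ ≤ r := by exact_mod_cast key

lemma mem_out_helper {α : Type*} {v : α} {e : Sym2 α} (h : v ∈ e) :
    v = e.out.1 ∨ v = e.out.2 := by
  have he : e = s(e.out.1, e.out.2) := by
    conv_lhs => rw [← e.out_eq]
  rw [he, Sym2.mem_iff] at h
  exact h

/-- **Corollary (line graphs).**  Let `G` be the line graph of a simple undirected graph
`H`, with `n ≥ 1` vertices (one per edge of `H`, two vertices adjacent iff the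
corresponding edges of `H` share an endpoint).  Viewing `G` as an undirected side
information graph, the clique covering scheme approximates the broadcast rate within a
factor of `n^(2/3)`: `χ(Ḡ) ≤ n^(2/3) * β(G)`. -/
theorem corollary_line_graph {V : Type*} [Fintype V] [DecidableEq V]
    (H : SimpleGraph V) [DecidableRel H.Adj]
    (hn : 1 ≤ Fintype.card H.edgeSet) :
    (((H.lineGraph)ᶜ.chromaticNumber.toNat : ℝ)) ≤
      (Fintype.card H.edgeSet : ℝ) ^ ((2 : ℝ) / 3) * broadcastRate H.lineGraph.Adj := by
  classical
  set G := H.lineGraph with hG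
  set n := Fintype.card H.edgeSet with hn'
  -- a maximum independent set S of G
  obtain ⟨S, hSmem, hSmax⟩ := Finset.exists_max_image
    ((Finset.univ : Finset H.edgeSet).powerset.filter
      (fun A => ∀ i ∈ A, ∀ j ∈ A, ¬ G.Adj i j)) Finset.card
    ⟨∅, by simp⟩
  have hSind : ∀ i ∈ S, ∀ j ∈ S, ¬ G.Adj i j := (Finset.mem_filter.mp hSmem).2
  have hmax : ∀ A : Finset H.edgeSet, (∀ i ∈ A, ∀ j ∈ A, ¬ G.Adj i j) →
      A.card ≤ S.card := fun A hA =>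
    hSmax A (Finset.mem_filter.mpr ⟨Finset.mem_powerset.mpr (Finset.subset_univ A), hA⟩)
  obtain ⟨w⟩ : Nonempty H.edgeSet := Fintype.card_pos_iff.mp (by omega)
  have hs1 : 1 ≤ S.card := by
    have := hmax {w} (by
      intro i hi j hj
      simp only [Finset.mem_singleton] at hi hj
      subst hi; subst hj; exact G.loopless.irrefl _)
    simpa using this
  -- maximality of S
  have hmaximal : ∀ e : H.edgeSet, ∃ f ∈ S, e = f ∨ G.Adj e f := by
    intro e
    by_contra hcon
    push_neg at hcon
    have heS : e ∉ S := fun he => (hcon e he).1 rfl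
    have hind : ∀ i ∈ insert e S, ∀ j ∈ insert e S, ¬ G.Adj i j := by
      intro i hi j hj
      rcases Finset.mem_insert.mp hi with rfl | hi' <;>
        rcases Finset.mem_insert.mp hj with rfl | hj'
      · exact G.loopless.irrefl _
      · exact (hcon j hj').2
      · exact fun h => (hcon i hi').2 h.symm
      · exact hSind i hi' j hj'
    have := hmax _ hind
    rw [Finset.card_insert_of_notMem heS] at this
    omega
  -- broadcast rate lower bound
  have hβ : (S.card : ℝ) ≤ broadcastRate G.Adj := card_le_broadcastRate _ S hSind
  -- the color set: endpoints of edges in S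
  set C : Finset V := S.biUnion (fun f => {(f.1.out.1), (f.1.out.2)}) with hC
  have hCcard : C.card ≤ 2 * S.card := by
    calc C.card ≤ ∑ f ∈ S, ({(f.1.out.1), (f.1.out.2)} : Finset V).card :=
          Finset.card_biUnion_le
      _ ≤ ∑ f ∈ S, 2 := Finset.sum_le_sum (fun f _ =>
          (Finset.card_insert_le _ _).trans (by simp))
      _ = 2 * S.card := by rw [Finset.sum_const, smul_eq_mul, mul_comm]
  have hmemC : ∀ f ∈ S, ∀ v, v ∈ (f : H.edgeSet).1 → v ∈ C := by
    intro f hf v hv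
    refine Finset.mem_biUnion.mpr ⟨f, hf, ?_⟩
    rcases mem_out_helper hv with rfl | rfl <;> simp
  -- pick a color for each edge
  have hcol : ∀ e : H.edgeSet, ∃ v, v ∈ C ∧ v ∈ (e : H.edgeSet).1 := by
    intro e
    obtain ⟨f, hf, heq | hadj⟩ := hmaximal e
    · subst heq
      exact ⟨e.1.out.1, hmemC e hf _ (Sym2.out_fst_mem _), Sym2.out_fst_mem _⟩
    · obtain ⟨hne, v, hv1, hv2⟩ := (SimpleGraph.lineGraph_adj_iff_exists).mp hadj
      exact ⟨v, hmemC f hf v hv2, hv1⟩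
  choose col hcolC hcolmem using hcol
  -- coloring of Gᶜ
  have hcolorable : (Gᶜ).Colorable C.card := by
    have coloring : (Gᶜ).Coloring {v // v ∈ C} :=
      SimpleGraph.Coloring.mk (fun e => ⟨col e, hcolC e⟩) (by
        intro a b hab hcontra
        have hcc : col a = col b := congrArg Subtype.val hcontra
        have hGadj : G.Adj a b := SimpleGraph.lineGraph_adj_iff_exists.mpr
          ⟨hab.ne, col a, hcolmem a, hcc ▸ hcolmem b⟩
        exact ((SimpleGraph.compl_adj G a b).mp hab).2 hGadj)
    simpa [Fintype.card_coe] using coloring.colorable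
  have hχ2s : (Gᶜ).chromaticNumber.toNat ≤ 2 * S.card := by
    have h1 := hcolorable.chromaticNumber_le
    have h2 := ENat.toNat_le_toNat h1 (by simp)
    simpa using h2.trans hCcard
  have hχn : (Gᶜ).chromaticNumber.toNat ≤ n := by
    have h1 := (Gᶜ).colorable_of_fintype.chromaticNumber_le
    have h2 := ENat.toNat_le_toNat h1 (by simp)
    rwa [ENat.toNat_coe] at h2
  have hsn : S.card ≤ n := by
    exact (Finset.card_le_univ S).trans_eq Finset.card_univ
  -- arithmetic
  set β := broadcastRate G.Adj with hβdef
  have hβ1 : (1 : ℝ) ≤ β := le_trans (by exact_mod_cast hs1) hβ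
  have hn1 : (1 : ℝ) ≤ (n : ℝ) := by exact_mod_cast hn
  have hnpos : (0 : ℝ) < (n : ℝ) := by linarith
  have hn23 : (1 : ℝ) ≤ (n : ℝ) ^ ((2 : ℝ) / 3) :=
    Real.one_le_rpow hn1 (by norm_num)
  by_cases hc1 : (Gᶜ).chromaticNumber.toNat ≤ 1
  · calc (((Gᶜ).chromaticNumber.toNat : ℝ)) ≤ 1 := by exact_mod_cast hc1
      _ ≤ (n : ℝ) ^ ((2 : ℝ) / 3) * β := by nlinarith
  · -- toNat ≥ 2, so there exist two nonadjacent vertices, hence S.card ≥ 2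
    push_neg at hc1
    have hs2 : 2 ≤ S.card := by
      by_contra hcon2
      -- then every pair of distinct vertices is adjacent in G, so Gᶜ is 1-colorable
      have hall : ∀ a b : H.edgeSet, a ≠ b → G.Adj a b := by
        intro a b hab
        by_contra hnadj
        have hind : ∀ i ∈ ({a, b} : Finset H.edgeSet), ∀ j ∈ ({a, b} : Finset H.edgeSet),
            ¬ G.Adj i j := by
          intro i hi j hj
          simp only [Finset.mem_insert, Finset.mem_singleton] at hi hj
          rcases hi with rfl | rfl <;> rcases hj with rfl | rfl
          · exact G.loopless.irrefl _
          · exact hnadj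
          · exact fun h => hnadj h.symm
          · exact G.loopless.irrefl _
        have := hmax _ hind
        rw [Finset.card_insert_of_notMem (by simpa using hab), Finset.card_singleton] at this
        omega
      have hone : (Gᶜ).Colorable 1 := by
        have coloring : (Gᶜ).Coloring (Fin 1) :=
          SimpleGraph.Coloring.mk (fun _ => 0) (by
            intro a b hab hcontra
            exact ((SimpleGraph.compl_adj G a b).mp hab).2
              (hall a b ((SimpleGraph.compl_adj G a b).mp hab).1))
        simpa using coloring.colorable
      have h1 := hone.chromaticNumber_le
      have h2 := ENat.toNat_le_toNat h1 (by simp)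
      simp at h2
      omega
    have hβ2 : (S.card : ℝ) ≤ β := hβ
    by_cases hcase : n ≤ S.card ^ 3
    · -- c ≤ n = n^(2/3) * n^(1/3) ≤ n^(2/3) * S.card ≤ n^(2/3) * β
      have h13 : (n : ℝ) ^ ((1 : ℝ) / 3) ≤ (S.card : ℝ) := by
        have hcast : (n : ℝ) ≤ (S.card : ℝ) ^ (3 : ℕ) := by exact_mod_cast hcase
        calc (n : ℝ) ^ ((1 : ℝ) / 3)
            ≤ ((S.card : ℝ) ^ (3 : ℕ)) ^ ((1 : ℝ) / 3) :=
              Real.rpow_le_rpow (by positivity) hcast (by norm_num)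
          _ = (S.card : ℝ) := by
              rw [← Real.rpow_natCast (S.card : ℝ) 3, ← Real.rpow_mul (by positivity)]
              norm_num
      have hsplit : (n : ℝ) = (n : ℝ) ^ ((2 : ℝ) / 3) * (n : ℝ) ^ ((1 : ℝ) / 3) := by
        rw [← Real.rpow_add hnpos]
        norm_num
      calc (((Gᶜ).chromaticNumber.toNat : ℝ)) ≤ (n : ℝ) := by exact_mod_cast hχn
        _ = (n : ℝ) ^ ((2 : ℝ) / 3) * (n : ℝ) ^ ((1 : ℝ) / 3) := hsplit
        _ ≤ (n : ℝ) ^ ((2 : ℝ) / 3) * (S.card : ℝ) :=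
            mul_le_mul_of_nonneg_left h13 (by positivity)
        _ ≤ (n : ℝ) ^ ((2 : ℝ) / 3) * β :=
            mul_le_mul_of_nonneg_left hβ2 (by positivity)
    · -- n > S.card^3 ≥ 8, so n^(2/3) ≥ 4 ≥ 2
      push_neg at hcase
      have h8 : (8 : ℝ) ≤ (n : ℝ) := by
        have h8n : 8 ≤ n := by
          have hp : 2 ^ 3 ≤ S.card ^ 3 := Nat.pow_le_pow_left hs2 3
          omega
        exact_mod_cast h8n
      have h2n : (2 : ℝ) ≤ (n : ℝ) ^ ((2 : ℝ) / 3) := by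
        have hmono : ((8 : ℝ)) ^ ((2 : ℝ) / 3) ≤ (n : ℝ) ^ ((2 : ℝ) / 3) :=
          Real.rpow_le_rpow (by norm_num) h8 (by norm_num)
        have h84 : ((8 : ℝ)) ^ ((2 : ℝ) / 3) = 4 := by
          rw [show (8 : ℝ) = 2 ^ (3 : ℕ) by norm_num,
            ← Real.rpow_natCast (2 : ℝ) 3, ← Real.rpow_mul (by norm_num)]
          norm_num
        linarith
      calc (((Gᶜ).chromaticNumber.toNat : ℝ)) ≤ 2 * (S.card : ℝ) := by exact_mod_cast hχ2s
        _ ≤ (n : ℝ) ^ ((2 : ℝ) / 3) * (S.card : ℝ) :=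
            mul_le_mul_of_nonneg_right h2n (by positivity)
        _ ≤ (n : ℝ) ^ ((2 : ℝ) / 3) * β :=
            mul_le_mul_of_nonneg_left hβ2 (by positivity)
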